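/- Let QH = H ⊗ Λ where H is a graded Z/2-vector space with H_i ≅ Z/2 for 0 ≤ i ≤ n and H_i = 0 otherwise, and Λ = Z/2[t,t⁻¹] with deg t = -(n+1). Suppose QH carries an associative graded product of degree -n with unit α_n (the generator in degree n), such that the generator α_{n-1} ∈ QH_{n-1} satisfies α_{n-1} * α_{n-1} = α_{n-2} and such that α_{n-2} is invertible. Then α_{n-1} is invertible and for all i, j ∈ Z the generators satisfy α_i * α_j = α_{i+j-n}, where α_{i-(n+1)k} := α_i t^k. -/

import Mathlib

noncomputable section

/-- transport along an equality of degrees. -/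
def gcast {A : ℤ → Type} [∀ i, AddCommGroup (A i)] [∀ i, Module (ZMod 2) (A i)]
    {i j : ℤ} (h : i = j) : A i →ₗ[ZMod 2] A j := by subst h; exact LinearMap.id

/-- let `QH = H ⊗ Λ` with all graded pieces `QH_i ≅ ℤ/2` (generator `α_i`),
carrying an associative graded product of degree `-n` with unit `α_n`, such that
`α_{n-1} * α_{n-1} = α_{n-2}` and `α_{n-2}` is invertible.  Then `α_{n-1}` is invertible
and `α_i * α_j = α_{i+j-n}` for all `i, j ∈ ℤ`. -/
theorem statement_12 (n : ℤ)
    (A : ℤ → Type) [∀ i, AddCommGroup (A i)] [∀ i, Module (ZMod 2) (A i)]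
    (α : ∀ i, A i) (hα : ∀ i, α i ≠ 0)
    (hdim : ∀ i, ∀ x : A i, x = 0 ∨ x = α i)
    (mul : ∀ i j, A i →ₗ[ZMod 2] A j →ₗ[ZMod 2] A (i + j - n))
    (hassoc : ∀ (i j k : ℤ) (x : A i) (y : A j) (z : A k),
      mul (i + j - n) k (mul i j x y) z =
        gcast (by ring) (mul i (j + k - n) x (mul j k y z)))
    (hunitL : ∀ (i : ℤ) (x : A i), mul n i (α n) x = gcast (by ring) x)
    (hunitR : ∀ (i : ℤ) (x : A i), mul i n x (α n) = gcast (by ring) x)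
    (hsq : mul (n - 1) (n - 1) (α (n - 1)) (α (n - 1)) = gcast (by ring) (α (n - 2)))
    (hinv : ∃ b : A (n + 2),
      mul (n - 2) (n + 2) (α (n - 2)) b = gcast (by ring) (α n) ∧
      mul (n + 2) (n - 2) b (α (n - 2)) = gcast (by ring) (α n)) :
    (∃ b : A (n + 1),
      mul (n - 1) (n + 1) (α (n - 1)) b = gcast (by ring) (α n) ∧
      mul (n + 1) (n - 1) b (α (n - 1)) = gcast (by ring) (α n)) ∧
    (∀ i j : ℤ, mul i j (α i) (α j) = α (i + j - n)) := by
  classical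
  have gcα : ∀ {i j : ℤ} (h : i = j), gcast (A := A) h (α i) = α j := by
    intro i j h; subst h; rfl
  have gc0 : ∀ {i j : ℤ} (h : i = j) (x : A i), gcast (A := A) h x = 0 ↔ x = 0 := by
    intro i j h x; subst h; exact Iff.rfl
  let S : ℤ → ℤ → Prop := fun i j => mul i j (α i) (α j) = α (i + j - n)
  have Scongr : ∀ {i i' j j' : ℤ}, i = i' → j = j' → (S i j ↔ S i' j') := by
    rintro i _ j _ rfl rfl; exact Iff.rfl
  have key : ∀ i j k : ℤ, (S i j ∧ S (i + j - n) k) ↔ (S j k ∧ S i (j + k - n)) := by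
    intro i j k
    have hL : (mul (i+j-n) k (mul i j (α i) (α j)) (α k) ≠ 0) ↔ (S i j ∧ S (i+j-n) k) := by
      rcases hdim _ (mul i j (α i) (α j)) with h | h
      · rw [h]
        simp only [map_zero, LinearMap.zero_apply, ne_eq, not_true_eq_false, false_iff,
          not_and]
        intro h1
        exact absurd (h1.symm.trans h) (hα _)
      · rw [h]
        constructor
        · intro hne
          refine ⟨h, ?_⟩
          rcases hdim _ (mul (i+j-n) k (α (i+j-n)) (α k)) with h2 | h2
          · exact absurd h2 hne
          · exact h2
        · rintro ⟨_, h2⟩; rw [h2]; exact hα _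
    have hR : (mul i (j+k-n) (α i) (mul j k (α j) (α k)) ≠ 0) ↔ (S j k ∧ S i (j+k-n)) := by
      rcases hdim _ (mul j k (α j) (α k)) with h | h
      · rw [h]
        simp only [map_zero, ne_eq, not_true_eq_false, false_iff, not_and]
        intro h1
        exact absurd (h1.symm.trans h) (hα _)
      · rw [h]
        constructor
        · intro hne
          refine ⟨h, ?_⟩
          rcases hdim _ (mul i (j+k-n) (α i) (α (j+k-n))) with h2 | h2
          · exact absurd h2 hne
          · exact h2
        · rintro ⟨_, h2⟩; rw [h2]; exact hα _
    rw [← hL, ← hR, hassoc, ne_eq, gc0]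
  have Sn : ∀ i, S n i := fun i => (hunitL i (α i)).trans (gcα _)
  have Sni : ∀ i, S i n := fun i => (hunitR i (α i)).trans (gcα _)
  have Ssq : S (n-1) (n-1) := hsq.trans (gcα _)
  obtain ⟨b, hb1, hb2⟩ := hinv
  have hbne : b ≠ 0 := by
    intro h
    rw [h, map_zero] at hb1
    exact hα _ ((gc0 _ _).mp hb1.symm)
  have hbα : b = α (n+2) := (hdim _ b).resolve_left hbne
  rw [hbα] at hb1 hb2
  have S22 : S (n-2) (n+2) := hb1.trans (gcα _)
  have S22' : S (n+2) (n-2) := hb2.trans (gcα _)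
  have step1 := (key (n-1) (n-1) (n+2)).mp ⟨Ssq, (Scongr (by ring) rfl).mp S22⟩
  have S11 : S (n-1) (n+1) := (Scongr rfl (by ring)).mp step1.2
  have step2 := (key (n+2) (n-1) (n-1)).mpr ⟨Ssq, (Scongr rfl (by ring)).mp S22'⟩
  have S11' : S (n+1) (n-1) := (Scongr (by ring) rfl).mp step2.2
  have Lfact : ∀ m : ℤ, S (n+1) m ∧ S (n-1) (m+1) := by
    intro m
    have h := (key (n-1) (n+1) m).mp ⟨S11, (Scongr (by ring) rfl).mp (Sn m)⟩
    exact ⟨h.1, (Scongr rfl (by ring)).mp h.2⟩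
  have Rfact : ∀ m : ℤ, S m (n+1) ∧ S (m+1) (n-1) := by
    intro m
    have h := (key m (n+1) (n-1)).mpr ⟨S11', (Scongr rfl (by ring)).mp (Sni m)⟩
    exact ⟨h.1, (Scongr (by ring) rfl).mp h.2⟩
  have shift : ∀ i j : ℤ, S i (j+1) ↔ S (i+1) j := by
    intro i j
    have h := key i (n+1) j
    constructor
    · intro hs
      exact (Scongr (by ring) rfl).mp (h.mpr ⟨(Lfact j).1, (Scongr rfl (by ring)).mp hs⟩).2
    · intro hs
      exact (Scongr rfl (by ring)).mp (h.mp ⟨(Rfact i).1, (Scongr (by ring) rfl).mp hs⟩).2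
  have main : ∀ d : ℤ, ∀ i, S i (n + d) := by
    intro d
    induction d using Int.induction_on with
    | zero => intro i; exact (Scongr rfl (by ring)).mp (Sni i)
    | succ d ih =>
        intro i
        exact (Scongr rfl (by push_cast; ring)).mp ((shift i (n + d)).mpr (ih (i+1)))
    | pred d ih =>
        intro i
        have h1 : S (i-1) ((n + (-(d:ℤ) - 1)) + 1) :=
          (Scongr rfl (by push_cast; ring)).mp (ih (i-1))
        exact (Scongr (by ring) rfl).mp ((shift (i-1) (n + (-(d:ℤ) - 1))).mp h1)
  have Sall : ∀ i j : ℤ, S i j := fun i j => (Scongr rfl (by ring)).mp (main (j - n) i)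
  refine ⟨⟨α (n+1), ?_, ?_⟩, fun i j => Sall i j⟩
  · exact (Sall (n-1) (n+1)).trans (gcα _).symm
  · exact (Sall (n+1) (n-1)).trans (gcα _).symm
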